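/- arXiv:1806.10045 — 6 statements merged into one kernel-verified Lean document; each statement's English description precedes it below -/
import Mathlib

section
/- If ⟨f, {g_s}⟩ is an MDP homomorphism from M = ⟨S, A, T, R⟩ onto M' = ⟨S', A', T', R'⟩, then for every state-action pair (s,a), the optimal action-value functions satisfy Q*(s,a) = Q'*(f(s), g_s(a)). -/
open Finset
open scoped Classical

/-- Bellman optimality operator for a finite MDP. -/
noncomputable def Bop {S A : Type*} [Fintype S] [Fintype A] [Nonempty A]
    (T : S → A → S → ℝ) (R : S → A → ℝ) (γ : ℝ) (Q : S → A → ℝ) : S → A → ℝ :=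
  fun s a => R s a + γ * ∑ s' : S, T s a s' *
    (Finset.univ.sup' Finset.univ_nonempty (fun a' => Q s' a'))

lemma sup'_comp_surj_aux {A A' : Type*} [Fintype A] [Fintype A'] [Nonempty A] [Nonempty A']
    (g : A → A') (hg : Function.Surjective g) (Q : A' → ℝ) :
    (Finset.univ : Finset A).sup' Finset.univ_nonempty (fun a => Q (g a))
      = (Finset.univ : Finset A').sup' Finset.univ_nonempty Q := by
  apply le_antisymm
  · exact Finset.sup'_le _ _ fun a _ => Finset.le_sup' Q (Finset.mem_univ (g a))
  · apply Finset.sup'_le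
    intro a' _
    obtain ⟨a, rfl⟩ := hg a'
    exact Finset.le_sup' (fun a => Q (g a)) (Finset.mem_univ a)

lemma abs_sup'_sub_sup'_le_aux {α : Type*} (s : Finset α) (hs : s.Nonempty)
    (f g : α → ℝ) :
    |s.sup' hs f - s.sup' hs g| ≤ s.sup' hs (fun a => |f a - g a|) := by
  rw [abs_sub_le_iff]
  constructor
  · rw [sub_le_iff_le_add]
    apply Finset.sup'_le
    intro a ha
    calc f a ≤ g a + |f a - g a| := by
          have := le_abs_self (f a - g a); linarith
      _ ≤ _ := by
          have h1 := Finset.le_sup' g ha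
          have h2 := Finset.le_sup' (fun a => |f a - g a|) ha
          linarith
  · rw [sub_le_iff_le_add]
    apply Finset.sup'_le
    intro a ha
    calc g a ≤ f a + |f a - g a| := by
          have := neg_abs_le (f a - g a); linarith
      _ ≤ _ := by
          have h1 := Finset.le_sup' f ha
          have h2 := Finset.le_sup' (fun a => |f a - g a|) ha
          linarith

/-- Ravindran's optimal value equivalence: under an MDP homomorphism,
`Q*(s,a) = Q'*(f s, g_s a)`. -/
theorem optimal_value_equivalence
    {S A S' A' : Type*} [Fintype S] [Fintype A] [Fintype S'] [Fintype A']
    [Nonempty S] [Nonempty A] [Nonempty S'] [Nonempty A']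
    (T : S → A → S → ℝ) (R : S → A → ℝ)
    (T' : S' → A' → S' → ℝ) (R' : S' → A' → ℝ)
    (γ : ℝ) (hγ0 : 0 ≤ γ) (hγ1 : γ < 1)
    (hTnn : ∀ s a s'', 0 ≤ T s a s'') (hTsum : ∀ s a, ∑ s'' : S, T s a s'' = 1)
    (hT'nn : ∀ s a s'', 0 ≤ T' s a s'') (hT'sum : ∀ s a, ∑ s'' : S', T' s a s'' = 1)
    (f : S → S') (g : S → A → A')
    (hfsurj : Function.Surjective f) (hgsurj : ∀ s, Function.Surjective (g s))
    (hT : ∀ s a s', T' (f s) (g s a) s' = ∑ x ∈ Finset.univ.filter (fun x => f x = s'), T s a x)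
    (hR : ∀ s a, R' (f s) (g s a) = R s a)
    (Qstar : S → A → ℝ) (hQstar : Bop T R γ Qstar = Qstar)
    (Q'star : S' → A' → ℝ) (hQ'star : Bop T' R' γ Q'star = Q'star) :
    ∀ s a, Qstar s a = Q'star (f s) (g s a) := by
  set Qt : S → A → ℝ := fun s a => Q'star (f s) (g s a) with hQtdef
  have hVeq : ∀ s' : S,
      (Finset.univ.sup' Finset.univ_nonempty (fun a' => Qt s' a'))
        = Finset.univ.sup' Finset.univ_nonempty (fun a' => Q'star (f s') a') :=
    fun s' => sup'_comp_surj_aux (g s') (hgsurj s') _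
  -- Qt is a fixed point of Bop T R γ
  have hfix : ∀ s a, Bop T R γ Qt s a = Qt s a := by
    intro s a
    have hsum : ∑ s'' : S, T s a s'' *
        (Finset.univ.sup' Finset.univ_nonempty fun a' => Qt s'' a')
        = ∑ t : S', T' (f s) (g s a) t *
            (Finset.univ.sup' Finset.univ_nonempty fun a' => Q'star t a') := by
      calc ∑ s'' : S, T s a s'' *
            (Finset.univ.sup' Finset.univ_nonempty fun a' => Qt s'' a')
          = ∑ s'' : S, T s a s'' *
            (Finset.univ.sup' Finset.univ_nonempty fun a' => Q'star (f s'') a') :=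
            Finset.sum_congr rfl fun x _ => by rw [hVeq]
        _ = ∑ t : S', ∑ x ∈ Finset.univ.filter (fun x => f x = t),
              T s a x * (Finset.univ.sup' Finset.univ_nonempty fun a' => Q'star (f x) a') :=
            (Finset.sum_fiberwise _ _ _).symm
        _ = ∑ t : S', T' (f s) (g s a) t *
              (Finset.univ.sup' Finset.univ_nonempty fun a' => Q'star t a') := by
            refine Finset.sum_congr rfl fun t _ => ?_
            rw [hT, Finset.sum_mul]
            refine Finset.sum_congr rfl fun x hx => ?_
            rw [(Finset.mem_filter.mp hx).2]
    show R s a + γ * _ = _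
    rw [hsum, ← hR s a]
    have := congrFun (congrFun hQ'star (f s)) (g s a)
    exact this
  -- contraction argument
  have hne : (Finset.univ : Finset (S × A)).Nonempty := Finset.univ_nonempty
  set M : ℝ := (Finset.univ : Finset (S × A)).sup' hne
      (fun p => |Qstar p.1 p.2 - Qt p.1 p.2|) with hMdef
  have hVle : ∀ s'' : S,
      |(Finset.univ.sup' Finset.univ_nonempty fun a' => Qstar s'' a')
        - (Finset.univ.sup' Finset.univ_nonempty fun a' => Qt s'' a')| ≤ M := by
    intro s''
    refine le_trans (abs_sup'_sub_sup'_le_aux _ _ _ _) ?_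
    apply Finset.sup'_le
    intro a' _
    exact Finset.le_sup' (f := fun p : S × A => |Qstar p.1 p.2 - Qt p.1 p.2|)
      (Finset.mem_univ (s'', a'))
  have hMle : M ≤ γ * M := by
    apply Finset.sup'_le
    rintro ⟨s, a⟩ _
    have e1 : Qstar s a - Qt s a
        = γ * ∑ s'' : S, T s a s'' *
            ((Finset.univ.sup' Finset.univ_nonempty fun a' => Qstar s'' a')
              - (Finset.univ.sup' Finset.univ_nonempty fun a' => Qt s'' a')) := by
      have hB1 := congrFun (congrFun hQstar s) a
      have hB2 := hfix s a
      have h2 : ∑ s'' : S, T s a s'' *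
          ((Finset.univ.sup' Finset.univ_nonempty fun a' => Qstar s'' a')
            - (Finset.univ.sup' Finset.univ_nonempty fun a' => Qt s'' a'))
          = (∑ s'' : S, T s a s'' *
              (Finset.univ.sup' Finset.univ_nonempty fun a' => Qstar s'' a'))
            - ∑ s'' : S, T s a s'' *
              (Finset.univ.sup' Finset.univ_nonempty fun a' => Qt s'' a') := by
        rw [← Finset.sum_sub_distrib]
        exact Finset.sum_congr rfl fun x _ => mul_sub _ _ _
      rw [h2, ← hB1, ← hB2]
      show (R s a + γ * _) - (R s a + γ * _) = _
      ring
    rw [e1, abs_mul, abs_of_nonneg hγ0]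
    have habs : |∑ s'' : S, T s a s'' *
        ((Finset.univ.sup' Finset.univ_nonempty fun a' => Qstar s'' a')
          - (Finset.univ.sup' Finset.univ_nonempty fun a' => Qt s'' a'))| ≤ M := by
      refine le_trans (Finset.abs_sum_le_sum_abs _ _) ?_
      calc ∑ s'' : S, |T s a s'' * _|
          ≤ ∑ s'' : S, T s a s'' * M := by
            refine Finset.sum_le_sum fun x _ => ?_
            rw [abs_mul, abs_of_nonneg (hTnn s a x)]
            exact mul_le_mul_of_nonneg_left (hVle x) (hTnn s a x)
        _ = M := by rw [← Finset.sum_mul, hTsum, one_mul]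
    exact mul_le_mul_of_nonneg_left habs hγ0
  intro s a
  have hle : |Qstar s a - Qt s a| ≤ M :=
    Finset.le_sup' (f := fun p : S × A => |Qstar p.1 p.2 - Qt p.1 p.2|)
      (Finset.mem_univ (s, a))
  have h0 : (0:ℝ) ≤ M := le_trans (abs_nonneg _) hle
  have hM0 : M ≤ 0 := by nlinarith
  have : |Qstar s a - Qt s a| = 0 := le_antisymm (le_trans hle hM0) (abs_nonneg _)
  have := abs_eq_zero.mp this
  have := sub_eq_zero.mp this
  exact this
end

section
/- If ⟨f, {g_s}⟩ is an MDP homomorphism from M onto M', and π' : S' → A' is an optimal policy for M', then any policy π : S → A satisfying g_s(π(s)) = π'(f(s)) for all s is an optimal policy for M. -/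
open Finset
open scoped Classical

lemma sup'_comp_surj {A A' : Type*} [Fintype A] [Fintype A'] [Nonempty A] [Nonempty A']
    (h : A → A') (hs : Function.Surjective h) (F : A' → ℝ) :
    Finset.univ.sup' Finset.univ_nonempty (fun a => F (h a)) =
      Finset.univ.sup' Finset.univ_nonempty F := by
  apply le_antisymm
  · exact Finset.sup'_le _ _ fun a _ => Finset.le_sup' F (Finset.mem_univ _)
  · refine Finset.sup'_le _ _ fun a' _ => ?_
    obtain ⟨a, rfl⟩ := hs a'
    exact Finset.le_sup' (fun a => F (h a)) (Finset.mem_univ a)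

lemma Bop_fixed_unique {S A : Type*} [Fintype S] [Fintype A] [Nonempty S] [Nonempty A]
    (T : S → A → S → ℝ) (R : S → A → ℝ) (γ : ℝ) (hγ0 : 0 ≤ γ) (hγ1 : γ < 1)
    (hTnn : ∀ s a s'', 0 ≤ T s a s'') (hTsum : ∀ s a, ∑ s'' : S, T s a s'' = 1)
    (Q1 Q2 : S → A → ℝ) (h1 : Bop T R γ Q1 = Q1) (h2 : Bop T R γ Q2 = Q2) :
    Q1 = Q2 := by
  set M : ℝ := Finset.univ.sup' Finset.univ_nonempty
    (fun p : S × A => |Q1 p.1 p.2 - Q2 p.1 p.2|) with hM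
  have hMle : ∀ s a, |Q1 s a - Q2 s a| ≤ M := fun s a =>
    Finset.le_sup' (fun p : S × A => |Q1 p.1 p.2 - Q2 p.1 p.2|) (Finset.mem_univ (s, a))
  have hM0 : 0 ≤ M := le_trans (abs_nonneg _) (hMle Classical.ofNonempty Classical.ofNonempty)
  -- value function bound
  have hV : ∀ s' : S,
      |Finset.univ.sup' Finset.univ_nonempty (fun a' => Q1 s' a') -
        Finset.univ.sup' Finset.univ_nonempty (fun a' => Q2 s' a')| ≤ M := by
    intro s'
    rw [abs_sub_le_iff]
    constructor
    · rw [sub_le_iff_le_add]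
      refine Finset.sup'_le _ _ fun a _ => ?_
      have := hMle s' a
      have h2' := Finset.le_sup' (fun a' => Q2 s' a') (Finset.mem_univ a)
      have : Q1 s' a - Q2 s' a ≤ M := (abs_le.mp this).2
      linarith
    · rw [sub_le_iff_le_add]
      refine Finset.sup'_le _ _ fun a _ => ?_
      have := hMle s' a
      have h1' := Finset.le_sup' (fun a' => Q1 s' a') (Finset.mem_univ a)
      have : Q2 s' a - Q1 s' a ≤ M := by
        have := (abs_le.mp (hMle s' a)).1; linarith
      linarith
  have key : ∀ s a, |Q1 s a - Q2 s a| ≤ γ * M := by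
    intro s a
    conv_lhs => rw [← h1, ← h2]
    simp only [Bop]
    have : R s a + γ * ∑ s' : S, T s a s' *
          Finset.univ.sup' Finset.univ_nonempty (fun a' => Q1 s' a') -
        (R s a + γ * ∑ s' : S, T s a s' *
          Finset.univ.sup' Finset.univ_nonempty (fun a' => Q2 s' a')) =
        γ * ∑ s' : S, T s a s' *
          (Finset.univ.sup' Finset.univ_nonempty (fun a' => Q1 s' a') -
           Finset.univ.sup' Finset.univ_nonempty (fun a' => Q2 s' a')) := by
      have hs : ∑ s' : S, T s a s' *
            Finset.univ.sup' Finset.univ_nonempty (fun a' => Q1 s' a') -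
          ∑ s' : S, T s a s' *
            Finset.univ.sup' Finset.univ_nonempty (fun a' => Q2 s' a') =
          ∑ s' : S, T s a s' *
            (Finset.univ.sup' Finset.univ_nonempty (fun a' => Q1 s' a') -
             Finset.univ.sup' Finset.univ_nonempty (fun a' => Q2 s' a')) := by
        rw [← Finset.sum_sub_distrib]
        exact Finset.sum_congr rfl fun i _ => by ring
      rw [← hs]; ring
    rw [this, abs_mul, abs_of_nonneg hγ0]
    have : |∑ s' : S, T s a s' *
        (Finset.univ.sup' Finset.univ_nonempty (fun a' => Q1 s' a') -
         Finset.univ.sup' Finset.univ_nonempty (fun a' => Q2 s' a'))| ≤ M := by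
      calc |∑ s' : S, T s a s' * _| ≤ ∑ s' : S, |T s a s' *
            (Finset.univ.sup' Finset.univ_nonempty (fun a' => Q1 s' a') -
             Finset.univ.sup' Finset.univ_nonempty (fun a' => Q2 s' a'))| :=
          Finset.abs_sum_le_sum_abs _ _
        _ ≤ ∑ s' : S, T s a s' * M := by
          refine Finset.sum_le_sum fun s' _ => ?_
          rw [abs_mul, abs_of_nonneg (hTnn s a s')]
          exact mul_le_mul_of_nonneg_left (hV s') (hTnn s a s')
        _ = M := by rw [← Finset.sum_mul, hTsum, one_mul]
    exact mul_le_mul_of_nonneg_left this hγ0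
  have hMγ : M ≤ γ * M := by
    rw [hM]
    exact Finset.sup'_le _ _ fun p _ => key p.1 p.2
  have hMz : M ≤ 0 := by nlinarith
  funext s a
  have := hMle s a
  have : |Q1 s a - Q2 s a| ≤ 0 := le_trans this hMz
  have := abs_nonneg (Q1 s a - Q2 s a)
  have : |Q1 s a - Q2 s a| = 0 := le_antisymm ‹_› ‹_›
  have : Q1 s a - Q2 s a = 0 := abs_eq_zero.mp this
  linarith

/-- An optimal policy for the abstract MDP lifts through an MDP homomorphism
to an optimal policy for the underlying MDP. -/
theorem lifted_policy_optimal
    {S A S' A' : Type*} [Fintype S] [Fintype A] [Fintype S'] [Fintype A']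
    [Nonempty S] [Nonempty A] [Nonempty S'] [Nonempty A']
    (T : S → A → S → ℝ) (R : S → A → ℝ)
    (T' : S' → A' → S' → ℝ) (R' : S' → A' → ℝ)
    (γ : ℝ) (hγ0 : 0 ≤ γ) (hγ1 : γ < 1)
    (hTnn : ∀ s a s'', 0 ≤ T s a s'') (hTsum : ∀ s a, ∑ s'' : S, T s a s'' = 1)
    (hT'nn : ∀ s a s'', 0 ≤ T' s a s'') (hT'sum : ∀ s a, ∑ s'' : S', T' s a s'' = 1)
    (f : S → S') (g : S → A → A')
    (hfsurj : Function.Surjective f) (hgsurj : ∀ s, Function.Surjective (g s))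
    (hT : ∀ s a s', T' (f s) (g s a) s' = ∑ x ∈ Finset.univ.filter (fun x => f x = s'), T s a x)
    (hR : ∀ s a, R' (f s) (g s a) = R s a)
    (Qstar : S → A → ℝ) (hQstar : Bop T R γ Qstar = Qstar)
    (Q'star : S' → A' → ℝ) (hQ'star : Bop T' R' γ Q'star = Q'star)
    (π' : S' → A')
    (hπ'opt : ∀ s', Q'star s' (π' s') =
      Finset.univ.sup' Finset.univ_nonempty (fun a' => Q'star s' a'))
    (π : S → A) (hlift : ∀ s, g s (π s) = π' (f s)) :
    ∀ s, Qstar s (π s) = Finset.univ.sup' Finset.univ_nonempty (fun a => Qstar s a) := by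
  set Qt : S → A → ℝ := fun s a => Q'star (f s) (g s a) with hQt
  have hfix : Bop T R γ Qt = Qt := by
    funext s a
    simp only [Bop, hQt]
    have hsup : ∀ s'' : S,
        Finset.univ.sup' Finset.univ_nonempty (fun a' => Q'star (f s'') (g s'' a')) =
          Finset.univ.sup' Finset.univ_nonempty (fun a' => Q'star (f s'') a') :=
      fun s'' => sup'_comp_surj (g s'') (hgsurj s'') _
    calc R s a + γ * ∑ s'' : S, T s a s'' *
          Finset.univ.sup' Finset.univ_nonempty (fun a' => Q'star (f s'') (g s'' a')) =
        R' (f s) (g s a) + γ * ∑ s'' : S, T s a s'' *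
          Finset.univ.sup' Finset.univ_nonempty (fun a' => Q'star (f s'') a') := by
          rw [hR]
          congr 1
          congr 1
          exact Finset.sum_congr rfl fun s'' _ => by rw [hsup]
      _ = R' (f s) (g s a) + γ * ∑ t' : S', T' (f s) (g s a) t' *
          Finset.univ.sup' Finset.univ_nonempty (fun a' => Q'star t' a') := by
          congr 1
          congr 1
          rw [← Finset.sum_fiberwise (Finset.univ) f
            (fun x => T s a x * Finset.univ.sup' Finset.univ_nonempty
              (fun a' => Q'star (f x) a'))]
          refine Finset.sum_congr rfl fun t' _ => ?_
          rw [hT, Finset.sum_mul]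
          refine Finset.sum_congr rfl fun x hx => ?_
          rw [Finset.mem_filter] at hx
          rw [hx.2]
      _ = Bop T' R' γ Q'star (f s) (g s a) := rfl
      _ = Q'star (f s) (g s a) := by rw [hQ'star]
  have hQeq : Qstar = Qt :=
    Bop_fixed_unique T R γ hγ0 hγ1 hTnn hTsum Qstar Qt hQstar hfix
  intro s
  rw [hQeq]
  simp only [hQt]
  rw [hlift s, hπ'opt (f s), ← sup'_comp_surj (g s) (hgsurj s)]
end

section
/- If ⟨f, {g_s}⟩ is an MDP homomorphism from M onto M', then the optimal state-value functions satisfy V*(s) = V'*(f(s)) for every s ∈ S. -/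
open Finset
open scoped Classical

lemma abs_sup'_sub_sup'_le {A : Type*} [Fintype A] [Nonempty A]
    (f g : A → ℝ) (C : ℝ) (h : ∀ a, |f a - g a| ≤ C) :
    |Finset.univ.sup' Finset.univ_nonempty f - Finset.univ.sup' Finset.univ_nonempty g| ≤ C := by
  rw [abs_sub_le_iff]
  constructor
  · rw [sub_le_iff_le_add]
    apply Finset.sup'_le
    intro a _
    have h1 := (abs_sub_le_iff.mp (h a)).1
    have h2 : g a ≤ Finset.univ.sup' Finset.univ_nonempty g :=
      Finset.le_sup' g (Finset.mem_univ a)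
    linarith
  · rw [sub_le_iff_le_add]
    apply Finset.sup'_le
    intro a _
    have h1 := (abs_sub_le_iff.mp (h a)).2
    have h2 : f a ≤ Finset.univ.sup' Finset.univ_nonempty f :=
      Finset.le_sup' f (Finset.mem_univ a)
    linarith

/-- Under an MDP homomorphism, the optimal state-value functions satisfy
`V*(s) = V'*(f s)`. -/
theorem optimal_state_value_equivalence
    {S A S' A' : Type*} [Fintype S] [Fintype A] [Fintype S'] [Fintype A']
    [Nonempty S] [Nonempty A] [Nonempty S'] [Nonempty A']
    (T : S → A → S → ℝ) (R : S → A → ℝ)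
    (T' : S' → A' → S' → ℝ) (R' : S' → A' → ℝ)
    (γ : ℝ) (hγ0 : 0 ≤ γ) (hγ1 : γ < 1)
    (hTnn : ∀ s a s'', 0 ≤ T s a s'') (hTsum : ∀ s a, ∑ s'' : S, T s a s'' = 1)
    (hT'nn : ∀ s a s'', 0 ≤ T' s a s'') (hT'sum : ∀ s a, ∑ s'' : S', T' s a s'' = 1)
    (f : S → S') (g : S → A → A')
    (hfsurj : Function.Surjective f) (hgsurj : ∀ s, Function.Surjective (g s))
    (hT : ∀ s a s', T' (f s) (g s a) s' = ∑ x ∈ Finset.univ.filter (fun x => f x = s'), T s a x)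
    (hR : ∀ s a, R' (f s) (g s a) = R s a)
    (Qstar : S → A → ℝ) (hQstar : Bop T R γ Qstar = Qstar)
    (Q'star : S' → A' → ℝ) (hQ'star : Bop T' R' γ Q'star = Q'star) :
    ∀ s : S, Finset.univ.sup' Finset.univ_nonempty (fun a => Qstar s a) =
      Finset.univ.sup' Finset.univ_nonempty (fun a' => Q'star (f s) a') := by
  classical
  set Qt : S → A → ℝ := fun s a => Q'star (f s) (g s a) with hQtdef
  -- pulled-back function has the same state values
  have hsup : ∀ s : S, Finset.univ.sup' Finset.univ_nonempty (fun a => Qt s a) =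
      Finset.univ.sup' Finset.univ_nonempty (fun a' => Q'star (f s) a') := by
    intro s
    apply le_antisymm
    · apply Finset.sup'_le
      intro a _
      exact Finset.le_sup' (fun a' => Q'star (f s) a') (Finset.mem_univ (g s a))
    · apply Finset.sup'_le
      intro a' _
      obtain ⟨a, ha⟩ := hgsurj s a'
      rw [← ha]
      exact Finset.le_sup' (fun a => Qt s a) (Finset.mem_univ a)
  -- Qt is a fixed point of Bop T R γ
  have hfix : Bop T R γ Qt = Qt := by
    funext s a
    have h1 : Bop T' R' γ Q'star (f s) (g s a) = Q'star (f s) (g s a) := by rw [hQ'star]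
    have hsum : ∑ s' : S', T' (f s) (g s a) s' *
        (Finset.univ.sup' Finset.univ_nonempty (fun a' => Q'star s' a'))
        = ∑ x : S, T s a x *
        (Finset.univ.sup' Finset.univ_nonempty (fun a' => Q'star (f x) a')) := by
      calc ∑ s' : S', T' (f s) (g s a) s' *
            (Finset.univ.sup' Finset.univ_nonempty (fun a' => Q'star s' a'))
          = ∑ s' : S', ∑ x ∈ Finset.univ.filter (fun x => f x = s'),
            T s a x * (Finset.univ.sup' Finset.univ_nonempty (fun a' => Q'star (f x) a')) := by
            refine Finset.sum_congr rfl (fun s' _ => ?_)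
            rw [hT, Finset.sum_mul]
            refine Finset.sum_congr rfl (fun x hx => ?_)
            have : f x = s' := (Finset.mem_filter.mp hx).2
            rw [this]
        _ = ∑ x : S, T s a x *
            (Finset.univ.sup' Finset.univ_nonempty (fun a' => Q'star (f x) a')) := by
            exact Finset.sum_fiberwise _ _ _
    unfold Bop at h1 ⊢
    rw [hR, hsum] at h1
    simp only [hQtdef]
    rw [← h1]
    congr 2
    refine Finset.sum_congr rfl (fun x _ => ?_)
    rw [hsup x]
  -- uniqueness of the fixed point
  have huniq : Qt = Qstar := by
    set M : ℝ := Finset.univ.sup' Finset.univ_nonempty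
        (fun p : S × A => |Qt p.1 p.2 - Qstar p.1 p.2|) with hMdef
    have hMmem : ∀ s a, |Qt s a - Qstar s a| ≤ M := fun s a =>
      Finset.le_sup' (fun p : S × A => |Qt p.1 p.2 - Qstar p.1 p.2|) (Finset.mem_univ (s, a))
    have hM0 : 0 ≤ M :=
      le_trans (abs_nonneg _) (hMmem (Classical.arbitrary S) (Classical.arbitrary A))
    have hbound : ∀ s a, |Qt s a - Qstar s a| ≤ γ * M := by
      intro s a
      have h1 : Qt s a = Bop T R γ Qt s a := by rw [hfix]
      have h2 : Qstar s a = Bop T R γ Qstar s a := by rw [hQstar]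
      rw [h1, h2]
      unfold Bop
      have key : ∀ x : S,
          |Finset.univ.sup' Finset.univ_nonempty (fun a' => Qt x a') -
           Finset.univ.sup' Finset.univ_nonempty (fun a' => Qstar x a')| ≤ M :=
        fun x => abs_sup'_sub_sup'_le _ _ M (fun a' => hMmem x a')
      have hdiff : (R s a + γ * ∑ x : S, T s a x *
            (Finset.univ.sup' Finset.univ_nonempty (fun a' => Qt x a'))) -
          (R s a + γ * ∑ x : S, T s a x *
            (Finset.univ.sup' Finset.univ_nonempty (fun a' => Qstar x a')))
          = γ * ∑ x : S, T s a x *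
            ((Finset.univ.sup' Finset.univ_nonempty (fun a' => Qt x a')) -
             (Finset.univ.sup' Finset.univ_nonempty (fun a' => Qstar x a'))) := by
        simp only [mul_sub]
        rw [Finset.sum_sub_distrib]
        ring
      rw [hdiff, abs_mul, abs_of_nonneg hγ0]
      have hsle : |∑ x : S, T s a x *
            ((Finset.univ.sup' Finset.univ_nonempty (fun a' => Qt x a')) -
             (Finset.univ.sup' Finset.univ_nonempty (fun a' => Qstar x a')))| ≤ M := by
        calc |∑ x : S, T s a x * _| ≤ ∑ x : S, |T s a x *
              ((Finset.univ.sup' Finset.univ_nonempty (fun a' => Qt x a')) -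
               (Finset.univ.sup' Finset.univ_nonempty (fun a' => Qstar x a')))| :=
            Finset.abs_sum_le_sum_abs _ _
          _ ≤ ∑ x : S, T s a x * M := by
            refine Finset.sum_le_sum (fun x _ => ?_)
            rw [abs_mul, abs_of_nonneg (hTnn s a x)]
            exact mul_le_mul_of_nonneg_left (key x) (hTnn s a x)
          _ = M := by rw [← Finset.sum_mul, hTsum, one_mul]
      exact mul_le_mul_of_nonneg_left hsle hγ0
    have hMle : M ≤ γ * M := by
      apply Finset.sup'_le
      intro p _
      exact hbound p.1 p.2
    have hMzero : M = 0 := by nlinarith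
    funext s a
    have := hbound s a
    rw [hMzero] at this
    have : |Qt s a - Qstar s a| ≤ 0 := by linarith
    have := abs_nonpos_iff.mp this
    linarith [sub_eq_zero.mp this, this]
  intro s
  rw [← huniq]
  exact hsup s
end

section
/- If ⟨f, {g_s}⟩ is an MDP homomorphism from M onto M', then for every function Q' : S' × A' → ℝ, the pullback Q(s,a) := Q'(f(s), g_s(a)) satisfies: applying the Bellman optimality operator of M to Q equals the pullback of applying the Bellman optimality operator of M' to Q'. That is, the Bellman operators commute with the pullback along the homomorphism. -/
open Finset
open scoped Classical

/-- The Bellman optimality operators commute with the pullback along an MDP homomorphism. -/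
theorem bellman_commutes_with_pullback
    {S A S' A' : Type*} [Fintype S] [Fintype A] [Fintype S'] [Fintype A']
    [Nonempty S] [Nonempty A] [Nonempty S'] [Nonempty A']
    (T : S → A → S → ℝ) (R : S → A → ℝ)
    (T' : S' → A' → S' → ℝ) (R' : S' → A' → ℝ)
    (γ : ℝ)
    (f : S → S') (g : S → A → A')
    (hfsurj : Function.Surjective f) (hgsurj : ∀ s, Function.Surjective (g s))
    (hT : ∀ s a s', T' (f s) (g s a) s' = ∑ x ∈ Finset.univ.filter (fun x => f x = s'), T s a x)
    (hR : ∀ s a, R' (f s) (g s a) = R s a) :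
    ∀ Q' : S' → A' → ℝ,
      Bop T R γ (fun s a => Q' (f s) (g s a)) =
      fun s a => Bop T' R' γ Q' (f s) (g s a) := by
  intro Q'
  funext s a
  have hsup : ∀ x : S,
      (Finset.univ.sup' Finset.univ_nonempty (fun a'' => Q' (f x) (g x a''))) =
      (Finset.univ.sup' Finset.univ_nonempty (fun a' => Q' (f x) a')) := by
    intro x
    have himg : (Finset.univ : Finset A).image (g x) = (Finset.univ : Finset A') := by
      apply Finset.eq_univ_of_forall
      intro a'
      obtain ⟨b, hb⟩ := hgsurj x a'
      exact Finset.mem_image.mpr ⟨b, Finset.mem_univ b, hb⟩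
    calc (Finset.univ : Finset A).sup' Finset.univ_nonempty (fun a'' => Q' (f x) (g x a''))
        = ((Finset.univ : Finset A).image (g x)).sup'
            (Finset.univ_nonempty.image _) (fun a' => Q' (f x) a') := by
          rw [Finset.sup'_image]; rfl
      _ = (Finset.univ : Finset A').sup' Finset.univ_nonempty (fun a' => Q' (f x) a') := by
          exact Finset.sup'_congr _ himg (fun _ _ => rfl)
  simp only [Bop, hR, hsup]
  congr 1
  congr 1
  calc ∑ x : S, T s a x * (Finset.univ.sup' Finset.univ_nonempty (fun a' => Q' (f x) a'))
      = ∑ t' : S', ∑ x ∈ Finset.univ.filter (fun x => f x = t'),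
          T s a x * (Finset.univ.sup' Finset.univ_nonempty (fun a' => Q' (f x) a')) := by
        exact (Finset.sum_fiberwise Finset.univ f _).symm
    _ = ∑ t' : S', T' (f s) (g s a) t' *
          (Finset.univ.sup' Finset.univ_nonempty (fun a' => Q' t' a')) := by
        apply Finset.sum_congr rfl
        intro t' _
        rw [hT, Finset.sum_mul]
        apply Finset.sum_congr rfl
        intro x hx
        rw [(Finset.mem_filter.mp hx).2]
end

section
/- If ⟨f, {g_s}⟩ is an MDP homomorphism from M onto M' and s₁, s₂ ∈ S satisfy f(s₁) = f(s₂), then V*(s₁) = V*(s₂); i.e., the optimal value function is constant on the fibers of f. -/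
open Finset
open scoped Classical

/-- Under an MDP homomorphism, the optimal value function is constant on the fibers of `f`. -/
theorem optimal_value_constant_on_fibers
    {S A S' A' : Type*} [Fintype S] [Fintype A] [Fintype S'] [Fintype A']
    [Nonempty S] [Nonempty A] [Nonempty S'] [Nonempty A']
    (T : S → A → S → ℝ) (R : S → A → ℝ)
    (T' : S' → A' → S' → ℝ) (R' : S' → A' → ℝ)
    (γ : ℝ) (hγ0 : 0 ≤ γ) (hγ1 : γ < 1)
    (hTnn : ∀ s a s'', 0 ≤ T s a s'') (hTsum : ∀ s a, ∑ s'' : S, T s a s'' = 1)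
    (hT'nn : ∀ s a s'', 0 ≤ T' s a s'') (hT'sum : ∀ s a, ∑ s'' : S', T' s a s'' = 1)
    (f : S → S') (g : S → A → A')
    (hfsurj : Function.Surjective f) (hgsurj : ∀ s, Function.Surjective (g s))
    (hT : ∀ s a s', T' (f s) (g s a) s' = ∑ x ∈ Finset.univ.filter (fun x => f x = s'), T s a x)
    (hR : ∀ s a, R' (f s) (g s a) = R s a)
    (Qstar : S → A → ℝ) (hQstar : Bop T R γ Qstar = Qstar)
    (s₁ s₂ : S) (hfib : f s₁ = f s₂) :
    Finset.univ.sup' Finset.univ_nonempty (fun a => Qstar s₁ a) =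
      Finset.univ.sup' Finset.univ_nonempty (fun a => Qstar s₂ a) := by

  classical
  set V : S → ℝ := fun s => Finset.univ.sup' Finset.univ_nonempty (fun a => Qstar s a) with hV
  -- the set of "matched" pairs
  let P : Finset ((S × A) × (S × A)) :=
    Finset.univ.filter (fun q => f q.1.1 = f q.2.1 ∧ g q.1.1 q.1.2 = g q.2.1 q.2.2)
  have hPne : P.Nonempty := by
    refine ⟨((s₁, Classical.arbitrary A), (s₁, Classical.arbitrary A)), ?_⟩
    simp [P]
  set E : ℝ := P.sup' hPne (fun q => Qstar q.1.1 q.1.2 - Qstar q.2.1 q.2.2) with hE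
  have hE0 : 0 ≤ E := by
    have hmem : ((s₁, Classical.arbitrary A), (s₁, Classical.arbitrary A)) ∈ P :=
      Finset.mem_filter.2 ⟨Finset.mem_univ _, rfl, rfl⟩
    have h := Finset.le_sup' (f := fun q : (S × A) × (S × A) => Qstar q.1.1 q.1.2 - Qstar q.2.1 q.2.2) hmem
    simp only [sub_self] at h
    rw [hE]
    exact h
  have hQ : ∀ s a, Qstar s a = R s a + γ * ∑ s'' : S, T s a s'' * V s'' := by
    intro s a
    have := congrFun (congrFun hQstar s) a
    simp only [Bop] at this
    exact this.symm
  have key1 : ∀ x y : S, f x = f y → V x ≤ V y + E := by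
    intro x y hxy
    apply Finset.sup'_le
    intro a _
    obtain ⟨b, hb⟩ := hgsurj y (g x a)
    have hmem : ((x, a), (y, b)) ∈ P := by
      simp only [P, Finset.mem_filter, Finset.mem_univ, true_and]
      exact ⟨hxy, hb.symm⟩
    have h1 : Qstar x a - Qstar y b ≤ E :=
      Finset.le_sup' (f := fun q : (S × A) × (S × A) => Qstar q.1.1 q.1.2 - Qstar q.2.1 q.2.2) hmem
    have h2 : Qstar y b ≤ V y := Finset.le_sup' (fun a => Qstar y a) (Finset.mem_univ b)
    linarith
  have key2 : ∀ (u : S) (a : A) (v : S) (b : A), f u = f v → g u a = g v b →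
      (∑ x : S, T u a x * V x) - (∑ x : S, T v b x * V x) ≤ E := by
    intro u a v b huv hab
    have hfibne : ∀ s' : S', (Finset.univ.filter (fun x => f x = s')).Nonempty := by
      intro s'
      obtain ⟨x, hx⟩ := hfsurj s'
      exact ⟨x, Finset.mem_filter.2 ⟨Finset.mem_univ _, hx⟩⟩
    have hsum1 := Finset.sum_fiberwise Finset.univ f (fun x => T u a x * V x)
    have hsum2 := Finset.sum_fiberwise Finset.univ f (fun x => T v b x * V x)
    rw [← hsum1, ← hsum2, ← Finset.sum_sub_distrib]
    have hbound : ∀ s' : S',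
        (∑ x ∈ Finset.univ.filter (fun x => f x = s'), T u a x * V x) -
          (∑ x ∈ Finset.univ.filter (fun x => f x = s'), T v b x * V x) ≤
          T' (f u) (g u a) s' * E := by
      intro s'
      obtain ⟨x₀, hx₀mem, hx₀⟩ := Finset.exists_mem_eq_inf' (hfibne s') V
      have hx₀f : f x₀ = s' := (Finset.mem_filter.1 hx₀mem).2
      have hup : (∑ x ∈ Finset.univ.filter (fun x => f x = s'), T u a x * V x) ≤
          T' (f u) (g u a) s' * (V x₀ + E) := by
        rw [hT u a s', Finset.sum_mul]
        apply Finset.sum_le_sum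
        intro x hx
        have hxf : f x = s' := (Finset.mem_filter.1 hx).2
        have : V x ≤ V x₀ + E := key1 x x₀ (by rw [hxf, hx₀f])
        exact mul_le_mul_of_nonneg_left this (hTnn u a x)
      have hlo : T' (f u) (g u a) s' * V x₀ ≤
          (∑ x ∈ Finset.univ.filter (fun x => f x = s'), T v b x * V x) := by
        have : T' (f u) (g u a) s' = T' (f v) (g v b) s' := by rw [huv, hab]
        rw [this, hT v b s', Finset.sum_mul]
        apply Finset.sum_le_sum
        intro x hx
        have hVx : V x₀ ≤ V x := hx₀ ▸ Finset.inf'_le V hx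
        exact mul_le_mul_of_nonneg_left hVx (hTnn v b x)
      have := sub_le_sub hup hlo
      calc (∑ x ∈ Finset.univ.filter (fun x => f x = s'), T u a x * V x) -
            (∑ x ∈ Finset.univ.filter (fun x => f x = s'), T v b x * V x)
          ≤ T' (f u) (g u a) s' * (V x₀ + E) - T' (f u) (g u a) s' * V x₀ := this
        _ = T' (f u) (g u a) s' * E := by ring
    calc (∑ s' : S', ((∑ x ∈ Finset.univ.filter (fun x => f x = s'), T u a x * V x) -
            (∑ x ∈ Finset.univ.filter (fun x => f x = s'), T v b x * V x)))
        ≤ ∑ s' : S', T' (f u) (g u a) s' * E := Finset.sum_le_sum (fun s' _ => hbound s')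
      _ = (∑ s' : S', T' (f u) (g u a) s') * E := by rw [Finset.sum_mul]
      _ = E := by rw [hT'sum]; ring
  have hEle : E ≤ γ * E := by
    rw [hE]
    apply Finset.sup'_le
    rintro ⟨⟨x, a⟩, ⟨y, b⟩⟩ hq
    obtain ⟨-, hfq, hgq⟩ := Finset.mem_filter.1 hq
    have hRe : R x a = R y b := by rw [← hR x a, ← hR y b, hfq, hgq]
    have hs := key2 x a y b hfq hgq
    have := mul_le_mul_of_nonneg_left hs hγ0
    simp only []
    rw [hQ x a, hQ y b]
    linarith
  have hEzero : E = 0 := by nlinarith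
  have h12 := key1 s₁ s₂ hfib
  have h21 := key1 s₂ s₁ hfib.symm
  have : V s₁ = V s₂ := by rw [hEzero] at h12 h21; linarith
  simpa [hV] using this
end

section
/- For a finite MDP and γ ∈ [0,1), the optimal Q-function Q* is the supremum-norm limit of value iteration: for any initial Q₀, the iterates Qₙ₊₁ = B Qₙ under the Bellman optimality operator B satisfy ‖Qₙ − Q*‖ ≤ γⁿ ‖Q₀ − Q*‖; consequently, if ⟨f,{g_s}⟩ is an MDP homomorphism and Q'₀ is pulled back to Q₀(s,a) = Q'₀(f(s),g_s(a)), then every value-iteration iterate in M equals the pullback of the corresponding iterate in M'. -/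
open Finset
open scoped Classical

/-- Supremum norm of a Q-function on a finite MDP. -/
noncomputable def supNorm {S A : Type*} [Fintype S] [Fintype A] [Nonempty S] [Nonempty A]
    (Q : S → A → ℝ) : ℝ :=
  Finset.univ.sup' Finset.univ_nonempty (fun p : S × A => |Q p.1 p.2|)

lemma abs_sup'_sub_sup'_le_s14 {ι : Type*} (s : Finset ι) (hs : s.Nonempty)
    (f g : ι → ℝ) (B : ℝ) (h : ∀ x ∈ s, |f x - g x| ≤ B) :
    |s.sup' hs f - s.sup' hs g| ≤ B := by
  rw [abs_sub_le_iff]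
  constructor
  · obtain ⟨a, ha, hfa⟩ := Finset.exists_mem_eq_sup' hs f
    have h1 : g a ≤ s.sup' hs g := Finset.le_sup' g ha
    have h2 := abs_le.mp (h a ha)
    linarith [hfa ▸ (le_refl (s.sup' hs f))]
  · obtain ⟨a, ha, hga⟩ := Finset.exists_mem_eq_sup' hs g
    have h1 : f a ≤ s.sup' hs f := Finset.le_sup' f ha
    have h2 := abs_le.mp (h a ha)
    linarith

lemma abs_le_supNorm {S A : Type*} [Fintype S] [Fintype A] [Nonempty S] [Nonempty A]
    (Q : S → A → ℝ) (s : S) (a : A) : |Q s a| ≤ supNorm Q :=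
  Finset.le_sup' (fun p : S × A => |Q p.1 p.2|) (Finset.mem_univ (s, a))

lemma supNorm_nonneg {S A : Type*} [Fintype S] [Fintype A] [Nonempty S] [Nonempty A]
    (Q : S → A → ℝ) : 0 ≤ supNorm Q :=
  le_trans (abs_nonneg _) (abs_le_supNorm Q (Classical.arbitrary S) (Classical.arbitrary A))

lemma supNorm_le {S A : Type*} [Fintype S] [Fintype A] [Nonempty S] [Nonempty A]
    (Q : S → A → ℝ) (c : ℝ) (h : ∀ s a, |Q s a| ≤ c) : supNorm Q ≤ c :=
  Finset.sup'_le _ _ fun p _ => h p.1 p.2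

lemma Bop_contraction {S A : Type*} [Fintype S] [Fintype A] [Nonempty S] [Nonempty A]
    (T : S → A → S → ℝ) (R : S → A → ℝ) (γ : ℝ) (hγ0 : 0 ≤ γ)
    (hTnn : ∀ s a s'', 0 ≤ T s a s'') (hTsum : ∀ s a, ∑ s'' : S, T s a s'' = 1)
    (Q₁ Q₂ : S → A → ℝ) :
    supNorm (fun s a => Bop T R γ Q₁ s a - Bop T R γ Q₂ s a) ≤
      γ * supNorm (fun s a => Q₁ s a - Q₂ s a) := by
  set D := supNorm (fun s a => Q₁ s a - Q₂ s a) with hD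
  have hDnn : 0 ≤ D := supNorm_nonneg _
  apply supNorm_le
  intro s a
  have key : ∀ s' : S,
      |Finset.univ.sup' Finset.univ_nonempty (fun a' => Q₁ s' a') -
       Finset.univ.sup' Finset.univ_nonempty (fun a' => Q₂ s' a')| ≤ D := by
    intro s'
    apply abs_sup'_sub_sup'_le_s14
    intro a' _
    exact abs_le_supNorm (fun s a => Q₁ s a - Q₂ s a) s' a'
  have : Bop T R γ Q₁ s a - Bop T R γ Q₂ s a =
      γ * ∑ s' : S, T s a s' *
        (Finset.univ.sup' Finset.univ_nonempty (fun a' => Q₁ s' a') -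
         Finset.univ.sup' Finset.univ_nonempty (fun a' => Q₂ s' a')) := by
    simp only [Bop, mul_sub, Finset.sum_sub_distrib, mul_sub]
    ring
  rw [this, abs_mul, abs_of_nonneg hγ0]
  have hsum : |∑ s' : S, T s a s' *
      (Finset.univ.sup' Finset.univ_nonempty (fun a' => Q₁ s' a') -
       Finset.univ.sup' Finset.univ_nonempty (fun a' => Q₂ s' a'))| ≤ D := by
    calc |∑ s' : S, T s a s' * _| ≤ ∑ s' : S, |T s a s' *
        (Finset.univ.sup' Finset.univ_nonempty (fun a' => Q₁ s' a') -
         Finset.univ.sup' Finset.univ_nonempty (fun a' => Q₂ s' a'))| :=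
        Finset.abs_sum_le_sum_abs _ _
      _ ≤ ∑ s' : S, T s a s' * D := by
        apply Finset.sum_le_sum
        intro s' _
        rw [abs_mul, abs_of_nonneg (hTnn s a s')]
        exact mul_le_mul_of_nonneg_left (key s') (hTnn s a s')
      _ = D := by rw [← Finset.sum_mul, hTsum, one_mul]
  exact mul_le_mul_of_nonneg_left hsum hγ0

/-- Value iteration converges geometrically to `Q*`; moreover, along an MDP homomorphism,
every value-iteration iterate in `M` starting from the pullback of `Q'₀` equals the pullback
of the corresponding iterate in `M'`. -/
theorem value_iteration_convergence_and_pullback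
    {S A S' A' : Type*} [Fintype S] [Fintype A] [Fintype S'] [Fintype A']
    [Nonempty S] [Nonempty A] [Nonempty S'] [Nonempty A']
    (T : S → A → S → ℝ) (R : S → A → ℝ)
    (T' : S' → A' → S' → ℝ) (R' : S' → A' → ℝ)
    (γ : ℝ) (hγ0 : 0 ≤ γ) (hγ1 : γ < 1)
    (hTnn : ∀ s a s'', 0 ≤ T s a s'') (hTsum : ∀ s a, ∑ s'' : S, T s a s'' = 1)
    (f : S → S') (g : S → A → A')
    (hfsurj : Function.Surjective f) (hgsurj : ∀ s, Function.Surjective (g s))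
    (hT : ∀ s a s', T' (f s) (g s a) s' = ∑ x ∈ Finset.univ.filter (fun x => f x = s'), T s a x)
    (hR : ∀ s a, R' (f s) (g s a) = R s a)
    (Qstar : S → A → ℝ) (hQstar : Bop T R γ Qstar = Qstar) :
    (∀ (Q₀ : S → A → ℝ) (n : ℕ),
      supNorm (fun s a => (Bop T R γ)^[n] Q₀ s a - Qstar s a) ≤
        γ ^ n * supNorm (fun s a => Q₀ s a - Qstar s a)) ∧
    (∀ (Q'₀ : S' → A' → ℝ) (n : ℕ) (s : S) (a : A),
      (Bop T R γ)^[n] (fun s a => Q'₀ (f s) (g s a)) s a =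
        (Bop T' R' γ)^[n] Q'₀ (f s) (g s a)) := by
  constructor
  · intro Q₀ n
    induction n with
    | zero => simp
    | succ n ih =>
      rw [Function.iterate_succ_apply']
      calc supNorm (fun s a => Bop T R γ ((Bop T R γ)^[n] Q₀) s a - Qstar s a)
          = supNorm (fun s a => Bop T R γ ((Bop T R γ)^[n] Q₀) s a - Bop T R γ Qstar s a) := by
            rw [hQstar]
        _ ≤ γ * supNorm (fun s a => (Bop T R γ)^[n] Q₀ s a - Qstar s a) :=
            Bop_contraction T R γ hγ0 hTnn hTsum _ _
        _ ≤ γ * (γ ^ n * supNorm (fun s a => Q₀ s a - Qstar s a)) :=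
            mul_le_mul_of_nonneg_left ih hγ0
        _ = γ ^ (n + 1) * supNorm (fun s a => Q₀ s a - Qstar s a) := by ring
  · -- pullback commutes with one Bellman step
    have step : ∀ (Q' : S' → A' → ℝ) (s : S) (a : A),
        Bop T R γ (fun s a => Q' (f s) (g s a)) s a = Bop T' R' γ Q' (f s) (g s a) := by
      intro Q' s a
      have hsup : ∀ s'' : S,
          Finset.univ.sup' Finset.univ_nonempty (fun a' => Q' (f s'') (g s'' a')) =
          Finset.univ.sup' Finset.univ_nonempty (fun a'' => Q' (f s'') a'') := by
        intro s''
        apply le_antisymm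
        · exact Finset.sup'_le _ _ fun a' _ =>
            Finset.le_sup' (fun a'' => Q' (f s'') a'') (Finset.mem_univ (g s'' a'))
        · apply Finset.sup'_le
          intro a'' _
          obtain ⟨b, hb⟩ := hgsurj s'' a''
          exact hb ▸ Finset.le_sup' (fun a' => Q' (f s'') (g s'' a')) (Finset.mem_univ b)
      simp only [Bop, hR, hsup]
      congr 2
      calc ∑ s'' : S, T s a s'' *
            Finset.univ.sup' Finset.univ_nonempty (fun a'' => Q' (f s'') a'')
          = ∑ t : S', ∑ x ∈ Finset.univ.filter (fun x => f x = t), T s a x *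
              Finset.univ.sup' Finset.univ_nonempty (fun a'' => Q' (f x) a'') :=
            (Finset.sum_fiberwise Finset.univ f _).symm
        _ = ∑ t : S', T' (f s) (g s a) t *
              Finset.univ.sup' Finset.univ_nonempty (fun a'' => Q' t a'') := by
            refine Finset.sum_congr rfl fun t _ => ?_
            rw [hT, Finset.sum_mul]
            refine Finset.sum_congr rfl fun x hx => ?_
            rw [(Finset.mem_filter.mp hx).2]
    intro Q'₀ n
    induction n with
    | zero => intro s a; rfl
    | succ n ih =>
      intro s a
      rw [Function.iterate_succ_apply', Function.iterate_succ_apply']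
      have : (Bop T R γ)^[n] (fun s a => Q'₀ (f s) (g s a)) =
          fun s a => (Bop T' R' γ)^[n] Q'₀ (f s) (g s a) := by
        funext s a; exact ih s a
      rw [this]
      exact step _ s a
end
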